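/- arXiv:0907.3082 — 4 statements merged into one kernel-verified Lean document; each statement's English description precedes it below -/
import Mathlib

section
/- Let m be an infinite cardinal and let Π be a profinite group such that (i) Π is projective and (ii) every non-trivial finite split embedding problem for Π has exactly m proper solutions. Then the set of open normal subgroups of Π has cardinality m, and every non-trivial finite embedding problem for Π (not necessarily split) has exactly m proper solutions. -/
open Cardinal

universe u

/-- Continuity of a map into a set carrying the discrete topology. -/
def ContinuousToDiscrete {A B : Type*} [TopologicalSpace A] (f : A → B) : Prop :=
  ∀ s : Set B, IsOpen (f ⁻¹' s)

section Aux

theorem ctd_comp {A B C : Type*} [TopologicalSpace A] {l : A → B}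
    (hl : ContinuousToDiscrete l) (g : B → C) : ContinuousToDiscrete (g ∘ l) :=
  fun s => hl (g ⁻¹' s)

theorem ctd_homcomp {A : Type*} [TopologicalSpace A] [Group A] {B C : Type*} [Group B] [Group C]
    {l : A →* B} (hl : ContinuousToDiscrete l) (g : B →* C) :
    ContinuousToDiscrete (g.comp l) := by
  rw [MonoidHom.coe_comp]; exact ctd_comp hl g

theorem ctd_rangeRestrict {A : Type*} [TopologicalSpace A] [Group A] {B : Type*} [Group B]
    {l : A →* B} (hl : ContinuousToDiscrete l) : ContinuousToDiscrete l.rangeRestrict := by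
  intro s
  have h : (⇑l.rangeRestrict) ⁻¹' s = ⇑l ⁻¹' (Subtype.val '' s) := by
    ext x
    simp only [Set.mem_preimage, Set.mem_image]
    constructor
    · intro h; exact ⟨l.rangeRestrict x, h, l.coe_rangeRestrict x⟩
    · rintro ⟨a, ha, hax⟩
      have : a = l.rangeRestrict x := Subtype.ext (by rw [hax, l.coe_rangeRestrict])
      rwa [this] at ha
  rw [h]; exact hl _

theorem isOpen_ker {P : Type*} [Group P] [TopologicalSpace P] {B : Type*} [Group B]
    {l : P →* B} (hl : ContinuousToDiscrete l) : IsOpen ((l.ker : Subgroup P) : Set P) := by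
  have : ((l.ker : Subgroup P) : Set P) = ⇑l ⁻¹' {1} := by
    ext x; simp [MonoidHom.mem_ker]
  rw [this]; exact hl _

theorem ctd_mk' {P : Type*} [Group P] [TopologicalSpace P] [IsTopologicalGroup P]
    {N : Subgroup P} [N.Normal] (hN : IsOpen (N : Set P)) :
    ContinuousToDiscrete (QuotientGroup.mk' N) := by
  intro s
  have h : ⇑(QuotientGroup.mk' N) ⁻¹' s =
      ⋃ x ∈ ⇑(QuotientGroup.mk' N) ⁻¹' s, (fun y => x⁻¹ * y) ⁻¹' (N : Set P) := by
    ext y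
    simp only [Set.mem_iUnion, Set.mem_preimage, SetLike.mem_coe, exists_prop]
    constructor
    · intro hy; exact ⟨y, hy, by simpa using N.one_mem⟩
    · rintro ⟨x, hx, hxy⟩
      have : (QuotientGroup.mk' N) x = (QuotientGroup.mk' N) y := by
        simpa [QuotientGroup.mk'_apply] using (QuotientGroup.eq (s := N)).2 hxy
      rwa [← this]
  rw [h]
  exact isOpen_biUnion fun x _ => hN.preimage (continuous_const.mul continuous_id)

/-- Conjugation of permutations along an equivalence, as a monoid hom. -/
def permCongrHom {α β : Type*} (e : α ≃ β) : Equiv.Perm α →* Equiv.Perm β where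
  toFun σ := (e.symm.trans σ).trans e
  map_one' := by ext x; simp
  map_mul' σ τ := by ext x; simp

theorem permCongrHom_injective {α β : Type*} (e : α ≃ β) :
    Function.Injective (permCongrHom e) := by
  intro σ τ h
  ext x
  have := congrArg (fun p : Equiv.Perm β => e.symm (p (e x))) h
  simpa [permCongrHom] using this

variable (P : Type u) [Group P] [TopologicalSpace P] [IsTopologicalGroup P]
    [CompactSpace P] [T2Space P] [TotallyDisconnectedSpace P]

/-- The Cayley-type homomorphism attached to an open normal subgroup. -/
noncomputable def cayleyHom (N : Subgroup P) [N.Normal] [Finite (P ⧸ N)] :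
    P →* ULift.{u} (Equiv.Perm (Fin (Nat.card (P ⧸ N)))) :=
  ((MulEquiv.ulift.symm.toMonoidHom.comp
      (permCongrHom (Nat.equivFinOfCardPos (Nat.card_pos (α := P ⧸ N)).ne'))).comp
    (MulAction.toPermHom (P ⧸ N) (P ⧸ N))).comp (QuotientGroup.mk' N)

theorem cayleyHom_ker (N : Subgroup P) [N.Normal] [Finite (P ⧸ N)] :
    (cayleyHom P N).ker = N := by
  set g := (MulEquiv.ulift.symm.toMonoidHom.comp
      (permCongrHom (Nat.equivFinOfCardPos (Nat.card_pos (α := P ⧸ N)).ne'))).comp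
      (MulAction.toPermHom (P ⧸ N) (P ⧸ N)) with hg
  have ginj : Function.Injective g := by
    rw [hg, MonoidHom.coe_comp]
    refine Function.Injective.comp ?_ ?_
    · rw [MonoidHom.coe_comp]
      exact MulEquiv.ulift.symm.injective.comp (permCongrHom_injective _)
    · intro a b hab
      exact MulAction.toPerm_injective (by simpa using hab)
  ext x
  have hx : cayleyHom P N x = g ((QuotientGroup.mk' N) x) := rfl
  rw [MonoidHom.mem_ker, hx, ← map_one g, ginj.eq_iff]
  simp [QuotientGroup.mk'_apply, QuotientGroup.eq_one_iff]

theorem cayleyHom_cont (N : Subgroup P) [N.Normal] [Finite (P ⧸ N)]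
    (hN : IsOpen (N : Set P)) : ContinuousToDiscrete (cayleyHom P N) :=
  ctd_homcomp (ctd_mk' hN) _

end Aux

/-- If a profinite group `Π` is projective and every non-trivial finite split embedding problem
for `Π` has exactly `m` proper solutions (`m` an infinite cardinal), then the set of open normal
subgroups of `Π` has cardinality `m` and every non-trivial finite embedding problem (split or
not) has exactly `m` proper solutions. -/
theorem rank_eq_and_embeddingProblem_solutions_of_projective_of_quasiFree
    (P : Type u) [Group P] [TopologicalSpace P] [IsTopologicalGroup P]
    [CompactSpace P] [T2Space P] [TotallyDisconnectedSpace P]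
    (m : Cardinal.{u}) (hm : ℵ₀ ≤ m)
    (hproj : ∀ (G Γ : Type u) [Group G] [Group Γ] [Finite G] [Finite Γ]
      (α : P →* G) (f : Γ →* G), ContinuousToDiscrete α → Function.Surjective α →
      Function.Surjective f →
      ∃ l : P →* Γ, ContinuousToDiscrete l ∧ f.comp l = α)
    (hsplit : ∀ (G Γ : Type u) [Group G] [Group Γ] [Finite G] [Finite Γ]
      (α : P →* G) (f : Γ →* G), ContinuousToDiscrete α → Function.Surjective α →
      Function.Surjective f → (∃ s : G →* Γ, f.comp s = MonoidHom.id G) → f.ker ≠ ⊥ →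
      #{l : P →* Γ // ContinuousToDiscrete l ∧ Function.Surjective l ∧ f.comp l = α} = m) :
    #{H : Subgroup P // IsOpen (H : Set P) ∧ H.Normal} = m ∧
    ∀ (G Γ : Type u) [Group G] [Group Γ] [Finite G] [Finite Γ]
      (α : P →* G) (f : Γ →* G), ContinuousToDiscrete α → Function.Surjective α →
      Function.Surjective f → f.ker ≠ ⊥ →
      #{l : P →* Γ // ContinuousToDiscrete l ∧ Function.Surjective l ∧ f.comp l = α} = m := by
  classical
  -- Lemma A: for any nontrivial finite group Γ, there are exactly m continuous surjections P →* Γ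
  have lemA : ∀ (Γ : Type u) [Group Γ] [Finite Γ] [Nontrivial Γ],
      #{l : P →* Γ // ContinuousToDiscrete l ∧ Function.Surjective l} = m := by
    intro Γ _ _ _
    have cont1 : ContinuousToDiscrete (⇑(1 : P →* PUnit.{u+1})) := by
      intro s
      rcases Set.eq_empty_or_nonempty s with hs | hs
      · simp [hs]
      · obtain ⟨a, ha⟩ := hs
        have : s = Set.univ := Set.eq_univ_iff_forall.2 fun x => Subsingleton.elim a x ▸ ha
        simp [this]
    have surj1 : Function.Surjective (⇑(1 : P →* PUnit.{u+1})) :=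
      fun y => ⟨1, Subsingleton.elim _ _⟩
    have surjf : Function.Surjective (⇑(1 : Γ →* PUnit.{u+1})) :=
      fun y => ⟨1, Subsingleton.elim _ _⟩
    have hsplit1 : ∃ s : PUnit.{u+1} →* Γ, (1 : Γ →* PUnit.{u+1}).comp s = MonoidHom.id _ :=
      ⟨1, MonoidHom.ext fun x => Subsingleton.elim _ _⟩
    have hker1 : (1 : Γ →* PUnit.{u+1}).ker ≠ ⊥ := by
      obtain ⟨x, hx⟩ := exists_ne (1 : Γ)
      intro hbot
      have hmem : x ∈ (1 : Γ →* PUnit.{u+1}).ker := by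
        simp [MonoidHom.mem_ker]
      rw [hbot] at hmem
      exact hx (Subgroup.mem_bot.mp hmem)
    have := hsplit PUnit.{u+1} Γ 1 1 cont1 surj1 surjf hsplit1 hker1
    rw [← this]
    apply Cardinal.mk_congr
    apply Equiv.subtypeEquivRight
    intro l
    constructor
    · rintro ⟨h1, h2⟩
      exact ⟨h1, h2, MonoidHom.ext fun x => Subsingleton.elim _ _⟩
    · rintro ⟨h1, h2, _⟩
      exact ⟨h1, h2⟩
  -- Lemma B: for any finite group Γ, there are at most m continuous homs P →* Γ
  have lemB : ∀ (Γ : Type u) [Group Γ] [Finite Γ],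
      #{l : P →* Γ // ContinuousToDiscrete l} ≤ m := by
    intro Γ _ _
    haveI : Finite (Subgroup Γ) := Finite.of_injective _ (SetLike.coe_injective (A := Subgroup Γ))
    have hΨ : Function.Injective
        (fun l : {l : P →* Γ // ContinuousToDiscrete l} =>
          (⟨l.1.range, l.1.rangeRestrict, ctd_rangeRestrict l.2,
            l.1.rangeRestrict_surjective⟩ :
            Σ H : Subgroup Γ, {l' : P →* ↥H // ContinuousToDiscrete l' ∧
              Function.Surjective l'})) := by
      intro a b h
      have := congrArg
        (fun p : Σ H : Subgroup Γ, {l' : P →* ↥H // ContinuousToDiscrete l' ∧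
            Function.Surjective l'} => p.1.subtype.comp p.2.1) h
      simpa [MonoidHom.subtype_comp_rangeRestrict, Subtype.ext_iff] using this
    calc #{l : P →* Γ // ContinuousToDiscrete l}
        ≤ #(Σ H : Subgroup Γ, {l' : P →* ↥H // ContinuousToDiscrete l' ∧
            Function.Surjective l'}) := Cardinal.mk_le_of_injective hΨ
      _ = Cardinal.sum (fun H : Subgroup Γ =>
            #{l' : P →* ↥H // ContinuousToDiscrete l' ∧ Function.Surjective l'}) :=
          Cardinal.mk_sigma _
      _ ≤ Cardinal.sum (fun _ : Subgroup Γ => m) := by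
          apply Cardinal.sum_le_sum
          intro H
          rcases subsingleton_or_nontrivial ↥H with hH | hH
          · haveI : Subsingleton (P →* ↥H) :=
              ⟨fun f g => MonoidHom.ext fun x => Subsingleton.elim _ _⟩
            haveI : Subsingleton {l' : P →* ↥H // ContinuousToDiscrete l' ∧
                Function.Surjective l'} := ⟨fun a b => Subtype.ext (Subsingleton.elim _ _)⟩
            exact le_trans (Cardinal.le_one_iff_subsingleton.2 ‹_›)
              (le_trans Cardinal.one_le_aleph0 hm)
          · exact (lemA ↥H).le
      _ = #(Subgroup Γ) * m := Cardinal.sum_const' _ m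
      _ ≤ m * m := by
          apply mul_le_mul_left
          exact le_trans (Cardinal.lt_aleph0_of_finite _).le hm
      _ = m := Cardinal.mul_eq_self hm
  -- Part 1
  have part1 : #{H : Subgroup P // IsOpen (H : Set P) ∧ H.Normal} = m := by
    refine le_antisymm ?_ ?_
    · -- upper bound: inject into Σ n, continuous homs to ULift (Perm (Fin n))
      have hΨ : Function.Injective
          (fun N : {H : Subgroup P // IsOpen (H : Set P) ∧ H.Normal} =>
            haveI := N.2.2
            haveI : Finite (P ⧸ N.1) := Subgroup.quotient_finite_of_isOpen N.1 N.2.1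
            (⟨ULift.up (Nat.card (P ⧸ N.1)), cayleyHom P N.1, cayleyHom_cont P N.1 N.2.1⟩ :
              Σ n : ULift.{u} ℕ,
                {l : P →* ULift.{u} (Equiv.Perm (Fin n.down)) // ContinuousToDiscrete l})) := by
        intro a b h
        have hkk := congrArg
          (fun p : Σ n : ULift.{u} ℕ,
              {l : P →* ULift.{u} (Equiv.Perm (Fin n.down)) // ContinuousToDiscrete l} =>
            p.2.1.ker) h
        haveI := a.2.2; haveI := b.2.2
        haveI : Finite (P ⧸ a.1) := Subgroup.quotient_finite_of_isOpen a.1 a.2.1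
        haveI : Finite (P ⧸ b.1) := Subgroup.quotient_finite_of_isOpen b.1 b.2.1
        simp only [cayleyHom_ker] at hkk
        exact Subtype.ext hkk
      calc #{H : Subgroup P // IsOpen (H : Set P) ∧ H.Normal}
          ≤ #(Σ n : ULift.{u} ℕ,
              {l : P →* ULift.{u} (Equiv.Perm (Fin n.down)) // ContinuousToDiscrete l}) :=
            Cardinal.mk_le_of_injective hΨ
        _ = Cardinal.sum (fun n : ULift.{u} ℕ =>
              #{l : P →* ULift.{u} (Equiv.Perm (Fin n.down)) // ContinuousToDiscrete l}) :=
            Cardinal.mk_sigma _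
        _ ≤ Cardinal.sum (fun _ : ULift.{u} ℕ => m) :=
            Cardinal.sum_le_sum _ _ (fun n => lemB _)
        _ = #(ULift.{u} ℕ) * m := Cardinal.sum_const' _ m
        _ = ℵ₀ * m := by rw [Cardinal.mk_eq_aleph0]
        _ = m := by rw [Cardinal.mul_eq_max le_rfl hm, max_eq_right hm]
    · -- lower bound: surjections onto Z/2 give distinct kernels
      haveI : Nontrivial (ZMod 2) := ⟨⟨0, 1, by decide⟩⟩
      set Γ₂ := ULift.{u} (Multiplicative (ZMod 2)) with hΓ₂def
      have hΓ₂ : ∀ a b : Γ₂, a ≠ 1 → b ≠ 1 → a = b := by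
        intro a b ha hb
        have : ∀ x : Multiplicative (ZMod 2), x ≠ 1 → x = Multiplicative.ofAdd 1 := by decide
        have ha' : a.down ≠ 1 := fun h => ha (ULift.ext _ _ h)
        have hb' : b.down ≠ 1 := fun h => hb (ULift.ext _ _ h)
        exact ULift.ext _ _ ((this a.down ha').trans (this b.down hb').symm)
      have hinj : Function.Injective
          (fun l : {l : P →* Γ₂ // ContinuousToDiscrete l ∧ Function.Surjective l} =>
            (⟨l.1.ker, isOpen_ker l.2.1, l.1.normal_ker⟩ :
              {H : Subgroup P // IsOpen (H : Set P) ∧ H.Normal})) := by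
        intro a b h
        have hk : a.1.ker = b.1.ker :=
          congrArg (fun p : {H : Subgroup P // IsOpen (H : Set P) ∧ H.Normal} => p.1) h
        apply Subtype.ext
        apply MonoidHom.ext
        intro x
        by_cases hx : a.1 x = 1
        · have : x ∈ a.1.ker := hx
          rw [hk] at this
          rw [hx]; exact this.symm
        · have hbx : b.1 x ≠ 1 := by
            intro hb
            apply hx
            have : x ∈ b.1.ker := hb
            rw [← hk] at this
            exact this
          exact hΓ₂ _ _ hx hbx
      rw [← lemA Γ₂]
      exact Cardinal.mk_le_of_injective hinj
  refine ⟨part1, ?_⟩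
  -- Part 2
  intro G Γ _ _ _ _ α f hα hαs hfs hker
  refine le_antisymm ?_ ?_
  · -- upper bound
    have : Function.Injective
        (fun l : {l : P →* Γ // ContinuousToDiscrete l ∧ Function.Surjective l ∧
            f.comp l = α} => (⟨l.1, l.2.1⟩ : {l : P →* Γ // ContinuousToDiscrete l})) := by
      intro a b h
      exact Subtype.ext (congrArg (fun p : {l : P →* Γ // ContinuousToDiscrete l} => p.1) h)
    exact le_trans (Cardinal.mk_le_of_injective this) (lemB Γ)
  · -- lower bound
    obtain ⟨lam, hlamc, hlamf⟩ := hproj G Γ α f hα hαs hfs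
    set K := f.ker with hKdef
    set Γ₀ := lam.range with hΓ₀def
    set φ : ↥Γ₀ →* MulAut ↥K := MulAut.conjNormal.comp Γ₀.subtype with hφdef
    haveI : Finite (↥K ⋊[φ] ↥Γ₀) := Finite.of_equiv (↥K × ↥Γ₀)
      ⟨fun p => ⟨p.1, p.2⟩, fun x => (x.left, x.right), fun _ => rfl, fun _ => rfl⟩
    have hcompat : ∀ g : ↥Γ₀, K.subtype.comp (φ g).toMonoidHom =
        (MulAut.conj (Γ₀.subtype g)).toMonoidHom.comp K.subtype := by
      intro g
      ext n
      simp [hφdef, MulAut.conjNormal_apply]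
    set π : (↥K ⋊[φ] ↥Γ₀) →* Γ := SemidirectProduct.lift K.subtype Γ₀.subtype hcompat
      with hπdef
    have hπ_apply : ∀ x : ↥K ⋊[φ] ↥Γ₀, π x = (x.left : Γ) * (x.right : Γ) := fun x => rfl
    have hπsurj : Function.Surjective π := by
      intro γ
      obtain ⟨x, hx⟩ := hαs (f γ)
      have hfx : f (lam x) = f γ := by
        rw [← hx, ← hlamf]; rfl
      have hmemK : γ * (lam x)⁻¹ ∈ K := by
        rw [hKdef, MonoidHom.mem_ker, map_mul, map_inv, hfx, mul_inv_cancel]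
      refine ⟨⟨⟨γ * (lam x)⁻¹, hmemK⟩, ⟨lam x, ⟨x, rfl⟩⟩⟩, ?_⟩
      rw [hπ_apply]
      exact inv_mul_cancel_right γ (lam x)
    have hrkerne : (SemidirectProduct.rightHom : (↥K ⋊[φ] ↥Γ₀) →* ↥Γ₀).ker ≠ ⊥ := by
      obtain ⟨k, hk⟩ := Subgroup.ne_bot_iff_exists_ne_one.mp hker
      intro hbot
      have hmem : SemidirectProduct.inl k ∈
          (SemidirectProduct.rightHom : (↥K ⋊[φ] ↥Γ₀) →* ↥Γ₀).ker := by
        simp [MonoidHom.mem_ker]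
      rw [hbot] at hmem
      have : SemidirectProduct.inl k = (1 : ↥K ⋊[φ] ↥Γ₀) := Subgroup.mem_bot.mp hmem
      rw [← map_one (SemidirectProduct.inl (φ := φ))] at this
      exact hk (SemidirectProduct.inl_injective this)
    have hsols := hsplit ↥Γ₀ (↥K ⋊[φ] ↥Γ₀) lam.rangeRestrict SemidirectProduct.rightHom
      (ctd_rangeRestrict hlamc) lam.rangeRestrict_surjective
      SemidirectProduct.rightHom_surjective
      ⟨SemidirectProduct.inr, SemidirectProduct.rightHom_comp_inr⟩ hrkerne
    rw [← hsols]
    -- build the injection from split solutions to solutions of the original problem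
    have hΦinj : Function.Injective
        (fun μ : {l : P →* ↥K ⋊[φ] ↥Γ₀ // ContinuousToDiscrete l ∧ Function.Surjective l ∧
            SemidirectProduct.rightHom.comp l = lam.rangeRestrict} =>
          (⟨π.comp μ.1, ctd_homcomp μ.2.1 π, hπsurj.comp μ.2.2.1, by
            apply MonoidHom.ext
            intro x
            have hr : ((μ.1 x).right : Γ) = lam x := by
              have := DFunLike.congr_fun μ.2.2.2 x
              have h2 : (μ.1 x).right = lam.rangeRestrict x := this
              rw [h2, lam.coe_rangeRestrict]
            have hl : f ((μ.1 x).left : Γ) = 1 := (μ.1 x).left.2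
            show f (π (μ.1 x)) = α x
            rw [hπ_apply, map_mul, hl, one_mul, hr, ← hlamf]
            rfl⟩ :
            {l : P →* Γ // ContinuousToDiscrete l ∧ Function.Surjective l ∧
              f.comp l = α})) := by
      intro a b h
      have hval : π.comp a.1 = π.comp b.1 :=
        congrArg (fun p : {l : P →* Γ // ContinuousToDiscrete l ∧ Function.Surjective l ∧
          f.comp l = α} => p.1) h
      apply Subtype.ext
      apply MonoidHom.ext
      intro x
      have h1 : π (a.1 x) = π (b.1 x) := DFunLike.congr_fun hval x
      have ha : (a.1 x).right = lam.rangeRestrict x := DFunLike.congr_fun a.2.2.2 x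
      have hb : (b.1 x).right = lam.rangeRestrict x := DFunLike.congr_fun b.2.2.2 x
      rw [hπ_apply, hπ_apply, ha, hb] at h1
      have hleft : ((a.1 x).left : Γ) = ((b.1 x).left : Γ) := mul_right_cancel h1
      ext
      · exact hleft
      · rw [ha, hb]
    exact Cardinal.mk_le_of_injective hΦinj
end

section
/- Let Π be a profinite group whose set of open normal subgroups is countably infinite (i.e., Π has countably infinite rank). Then the following are equivalent: (i) every non-trivial finite split embedding problem for Π has exactly countably infinitely many proper solutions (i.e., Π is quasi-free of rank ℵ₀); (ii) every finite split embedding problem for Π has a proper solution. -/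
open Cardinal

universe u

section Aux

variable {G Γ : Type u} [Group G] [Group Γ]

/-- The `n`-fold fiber power of `f : Γ →* G`, as a subgroup of `Fin n → Γ`. -/
def fiberPow (f : Γ →* G) (n : ℕ) : Subgroup (Fin n → Γ) where
  carrier := {γ | ∀ i j, f (γ i) = f (γ j)}
  one_mem' := by intro i j; simp
  mul_mem' := by
    intro a b ha hb i j
    simp only [Pi.mul_apply, map_mul, ha i j, hb i j]
  inv_mem' := by
    intro a ha i j
    simp only [Pi.inv_apply, map_inv, ha i j]

lemma countable_ctsHom (P : Type u) [Group P] [TopologicalSpace P] [IsTopologicalGroup P]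
    [CompactSpace P]
    (hI : Countable {H : Subgroup P // IsOpen (H : Set P) ∧ H.Normal})
    [Finite Γ] :
    {l : P →* Γ | ContinuousToDiscrete l}.Countable := by
  have hfin : ∀ N : {H : Subgroup P // IsOpen (H : Set P) ∧ H.Normal},
      {l : P →* Γ | N.1 ≤ l.ker}.Finite := by
    intro N
    haveI := N.2.2
    haveI : Finite (P ⧸ N.1) := Subgroup.quotient_finite_of_isOpen N.1 N.2.1
    haveI : Finite ((P ⧸ N.1) →* Γ) :=
      Finite.of_injective (fun φ => (φ : (P ⧸ N.1) → Γ)) DFunLike.coe_injective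
    rw [← Set.finite_coe_iff]
    refine Finite.of_injective
      (fun l => (QuotientGroup.lift N.1 l.1 (fun x hx => l.2 hx) : (P ⧸ N.1) →* Γ)) ?_
    intro l1 l2 h
    apply Subtype.ext
    ext x
    have := congrArg (fun φ : (P ⧸ N.1) →* Γ => φ (QuotientGroup.mk x)) h
    simpa using this
  have hsub : {l : P →* Γ | ContinuousToDiscrete l} ⊆
      ⋃ N : {H : Subgroup P // IsOpen (H : Set P) ∧ H.Normal}, {l : P →* Γ | N.1 ≤ l.ker} := by
    intro l hl
    have hker : IsOpen ((l.ker : Set P)) := by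
      have := hl {1}
      exact this
    exact Set.mem_iUnion.mpr ⟨⟨l.ker, hker, l.normal_ker⟩, le_refl l.ker⟩
  exact Set.Countable.mono hsub (Set.countable_iUnion fun N => (hfin N).countable)

end Aux

/-- For a profinite group `Π` of countably infinite rank, `Π` is quasi-free (of rank `ℵ₀`),
i.e. every non-trivial finite split embedding problem has exactly `ℵ₀` proper solutions, if and
only if every finite split embedding problem for `Π` has a proper solution. -/
theorem quasiFree_iff_split_embeddingProblems_solvable
    (P : Type u) [Group P] [TopologicalSpace P] [IsTopologicalGroup P]
    [CompactSpace P] [T2Space P] [TotallyDisconnectedSpace P]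
    (hrank : #{H : Subgroup P // IsOpen (H : Set P) ∧ H.Normal} = ℵ₀) :
    (∀ (G Γ : Type u) [Group G] [Group Γ] [Finite G] [Finite Γ]
      (α : P →* G) (f : Γ →* G), ContinuousToDiscrete α → Function.Surjective α →
      Function.Surjective f → (∃ s : G →* Γ, f.comp s = MonoidHom.id G) → f.ker ≠ ⊥ →
      #{l : P →* Γ // ContinuousToDiscrete l ∧ Function.Surjective l ∧ f.comp l = α} = ℵ₀) ↔
    (∀ (G Γ : Type u) [Group G] [Group Γ] [Finite G] [Finite Γ]
      (α : P →* G) (f : Γ →* G), ContinuousToDiscrete α → Function.Surjective α →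
      Function.Surjective f → (∃ s : G →* Γ, f.comp s = MonoidHom.id G) →
      ∃ l : P →* Γ, ContinuousToDiscrete l ∧ Function.Surjective l ∧ f.comp l = α) := by
  constructor
  · intro hqf G Γ _ _ _ _ α f hα hαs hfs hsplit
    by_cases hk : f.ker = ⊥
    · -- `f` is an isomorphism
      have hinj : Function.Injective f := (MonoidHom.ker_eq_bot_iff f).mp hk
      let e := MulEquiv.ofBijective f ⟨hinj, hfs⟩
      refine ⟨e.symm.toMonoidHom.comp α, ?_, ?_, ?_⟩
      · intro s
        have h : ⇑(e.symm.toMonoidHom.comp α) ⁻¹' s = ⇑α ⁻¹' (⇑e.symm ⁻¹' s) := by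
          rw [MonoidHom.coe_comp, Set.preimage_comp]; rfl
        rw [h]; exact hα _
      · exact (MulEquiv.surjective e.symm).comp hαs
      · ext x
        exact e.apply_symm_apply (α x)
    · have h := hqf G Γ α f hα hαs hfs hsplit hk
      have hne : Nonempty
          {l : P →* Γ // ContinuousToDiscrete l ∧ Function.Surjective l ∧ f.comp l = α} := by
        rw [← Cardinal.mk_ne_zero_iff, h]
        exact aleph0_ne_zero
      obtain ⟨l, hl⟩ := hne
      exact ⟨l, hl⟩
  · intro hsolv G Γ _ _ _ _ α f hα hαs hfs hsplit hker
    obtain ⟨s0, hs0⟩ := hsplit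
    have hs0' : ∀ g, f (s0 g) = g := fun g => congrArg (fun φ => φ g) hs0
    -- countability
    have hI : Countable {H : Subgroup P // IsOpen (H : Set P) ∧ H.Normal} := by
      rw [← Cardinal.mk_le_aleph0_iff, hrank]
    have hT : {l : P →* Γ | ContinuousToDiscrete l}.Countable := countable_ctsHom P hI
    haveI hcount : Countable
        {l : P →* Γ // ContinuousToDiscrete l ∧ Function.Surjective l ∧ f.comp l = α} := by
      haveI := hT.to_subtype
      exact Function.Injective.countable
        (f := fun l : {l : P →* Γ // ContinuousToDiscrete l ∧ Function.Surjective l ∧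
          f.comp l = α} => (⟨l.1, l.2.1⟩ : {l : P →* Γ | ContinuousToDiscrete l}))
        (by
          intro l1 l2 h
          exact Subtype.ext
            (congrArg (fun x : {l : P →* Γ | ContinuousToDiscrete l} => x.1) h))
    -- for each n, an injection `Fin (n+1)` into the set of solutions
    have hinjn : ∀ n : ℕ, ∃ F : Fin (n + 1) →
        {l : P →* Γ // ContinuousToDiscrete l ∧ Function.Surjective l ∧ f.comp l = α},
        Function.Injective F := by
      intro n
      -- the fiber power embedding problem
      set H := fiberPow f (n + 1) with hH
      let fn : H →* G := f.comp ((Pi.evalMonoidHom (fun _ : Fin (n + 1) => Γ) 0).comp H.subtype)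
      have hfnsurj : Function.Surjective fn := by
        intro g
        refine ⟨⟨fun _ => s0 g, fun i j => rfl⟩, ?_⟩
        simp [fn, hs0']
      have hfnsplit : ∃ s : G →* H, fn.comp s = MonoidHom.id G := by
        refine ⟨MonoidHom.codRestrict (Pi.monoidHom fun _ : Fin (n + 1) => s0) H
          (fun g => fun i j => rfl), ?_⟩
        ext g
        simp [fn, MonoidHom.codRestrict, hs0']
        exact hs0' g
      obtain ⟨l, hlc, hls, hlα⟩ := hsolv G H α fn hα hαs hfnsurj hfnsplit
      have hlα' : ∀ p, f ((l p : Fin (n + 1) → Γ) 0) = α p :=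
        fun p => congrArg (fun φ => φ p) hlα
      -- the coordinate solutions
      let lam : Fin (n + 1) → (P →* Γ) := fun i =>
        (Pi.evalMonoidHom (fun _ : Fin (n + 1) => Γ) i).comp (H.subtype.comp l)
      have hlam : ∀ i p, lam i p = (l p : Fin (n + 1) → Γ) i := fun i p => rfl
      have hmemS : ∀ i, ContinuousToDiscrete (lam i) ∧ Function.Surjective (lam i) ∧
          f.comp (lam i) = α := by
        intro i
        refine ⟨?_, ?_, ?_⟩
        · intro s
          have h : ⇑(lam i) ⁻¹' s =
              ⇑l ⁻¹' ((fun x : H => (x : Fin (n + 1) → Γ) i) ⁻¹' s) := by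
            rfl
          rw [h]; exact hlc _
        · intro γ
          obtain ⟨p, hp⟩ := hls ⟨fun j => if j = i then γ else s0 (f γ), by
            intro a b
            by_cases ha : a = i <;> by_cases hb : b = i <;> simp [ha, hb, hs0']⟩
          refine ⟨p, ?_⟩
          have := congrArg (fun x : H => (x : Fin (n + 1) → Γ) i) hp
          simpa [hlam] using this
        · ext p
          have hmem := (l p).2
          calc f (lam i p) = f ((l p : Fin (n + 1) → Γ) i) := rfl
            _ = f ((l p : Fin (n + 1) → Γ) 0) := hmem i 0
            _ = α p := hlα' p
      obtain ⟨k, hkker, hkne⟩ := ((Subgroup.bot_or_exists_ne_one f.ker).resolve_left hker)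
      refine ⟨fun i => ⟨lam i, hmemS i⟩, ?_⟩
      intro i j hij
      by_contra hne
      obtain ⟨p, hp⟩ := hls ⟨fun m => if m = i then k else 1, by
        intro a b
        have hk1 : f k = 1 := hkker
        by_cases ha : a = i <;> by_cases hb : b = i <;> simp [ha, hb, hk1]⟩
      have h1 : lam i p = k := by
        have := congrArg (fun x : H => (x : Fin (n + 1) → Γ) i) hp
        simpa [hlam] using this
      have hji : j ≠ i := fun h => hne h.symm
      have h2 : lam j p = 1 := by
        have := congrArg (fun x : H => (x : Fin (n + 1) → Γ) j) hp
        simpa [hlam, hji] using this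
      have : lam i p = lam j p := by
        have := congrArg Subtype.val hij
        exact congrArg (fun φ : P →* Γ => φ p) this
      rw [h1, h2] at this
      exact hkne this
    haveI hinf : Infinite
        {l : P →* Γ // ContinuousToDiscrete l ∧ Function.Surjective l ∧ f.comp l = α} := by
      by_contra hfin
      rw [not_infinite_iff_finite] at hfin
      haveI := hfin
      haveI := Fintype.ofFinite
        {l : P →* Γ // ContinuousToDiscrete l ∧ Function.Surjective l ∧ f.comp l = α}
      obtain ⟨F, hF⟩ := hinjn (Fintype.card
        {l : P →* Γ // ContinuousToDiscrete l ∧ Function.Surjective l ∧ f.comp l = α})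
      have hle := Fintype.card_le_of_injective F hF
      simp [Fintype.card_fin] at hle
    exact Cardinal.mk_eq_aleph0 _
end

section
/- Let Π be a projective profinite group such that every finite split embedding problem for Π has a proper solution. Then every finite embedding problem for Π has a proper solution. -/
universe u

/-- If a profinite group `Π` is projective and every finite split embedding problem for `Π` has
a proper solution, then every finite embedding problem for `Π` has a proper solution. -/
theorem embeddingProblems_solvable_of_projective_of_split_solvable
    (P : Type u) [Group P] [TopologicalSpace P] [IsTopologicalGroup P]
    [CompactSpace P] [T2Space P] [TotallyDisconnectedSpace P]
    (hproj : ∀ (G Γ : Type u) [Group G] [Group Γ] [Finite G] [Finite Γ]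
      (α : P →* G) (f : Γ →* G), ContinuousToDiscrete α → Function.Surjective α →
      Function.Surjective f →
      ∃ l : P →* Γ, ContinuousToDiscrete l ∧ f.comp l = α)
    (hsplit : ∀ (G Γ : Type u) [Group G] [Group Γ] [Finite G] [Finite Γ]
      (α : P →* G) (f : Γ →* G), ContinuousToDiscrete α → Function.Surjective α →
      Function.Surjective f → (∃ s : G →* Γ, f.comp s = MonoidHom.id G) →
      ∃ l : P →* Γ, ContinuousToDiscrete l ∧ Function.Surjective l ∧ f.comp l = α) :
    ∀ (G Γ : Type u) [Group G] [Group Γ] [Finite G] [Finite Γ]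
      (α : P →* G) (f : Γ →* G), ContinuousToDiscrete α → Function.Surjective α →
      Function.Surjective f →
      ∃ l : P →* Γ, ContinuousToDiscrete l ∧ Function.Surjective l ∧ f.comp l = α := by
  intro G Γ _ _ _ _ α f hαc hαs hfs
  -- weak solution from projectivity
  obtain ⟨lam, hlamc, hlamf⟩ := hproj G Γ α f hαc hαs hfs
  -- H = image of the weak solution
  set H := lam.range with hH
  -- fiber product Δ = {(γ, h) | f γ = f h}
  let Δ : Subgroup (Γ × H) :=
    { carrier := {x | f x.1 = f x.2.1}
      one_mem' := by simp
      mul_mem' := by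
        intro a b ha hb
        simp only [Set.mem_setOf_eq] at *
        simp [ha, hb]
      inv_mem' := by
        intro a ha
        simp only [Set.mem_setOf_eq] at *
        simp [ha] }
  let α' : P →* H := lam.rangeRestrict
  let f' : Δ →* H := (MonoidHom.snd Γ H).comp Δ.subtype
  -- section of f'
  let s : H →* Δ :=
    { toFun := fun h => ⟨((h : Γ), h), rfl⟩
      map_one' := by rfl
      map_mul' := by intro a b; rfl }
  have hα'c : ContinuousToDiscrete α' := by
    intro t
    have : (α' ⁻¹' t) = lam ⁻¹' (Subtype.val '' t) := by
      ext p
      simp only [Set.mem_preimage, Set.mem_image]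
      constructor
      · intro h; exact ⟨α' p, h, rfl⟩
      · rintro ⟨x, hx, hxe⟩
        have : x = α' p := Subtype.ext hxe
        rwa [this] at hx
    rw [this]
    exact hlamc _
  have hα's : Function.Surjective α' := lam.rangeRestrict_surjective
  have hf's : Function.Surjective f' := by
    intro h
    exact ⟨s h, rfl⟩
  have hsec : ∃ σ : H →* Δ, f'.comp σ = MonoidHom.id H := ⟨s, by ext h; rfl⟩
  obtain ⟨μ, hμc, hμs, hμf⟩ := hsplit H Δ α' f' hα'c hα's hf's hsec
  -- the solution
  refine ⟨((MonoidHom.fst Γ H).comp Δ.subtype).comp μ, ?_, ?_, ?_⟩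
  · intro t
    have : (⇑(((MonoidHom.fst Γ H).comp Δ.subtype).comp μ) ⁻¹' t)
        = ⇑μ ⁻¹' (⇑((MonoidHom.fst Γ H).comp Δ.subtype) ⁻¹' t) := rfl
    rw [this]
    exact hμc _
  · intro γ
    obtain ⟨p, hp⟩ := hαs (f γ)
    have hmem : (γ, α' p) ∈ Δ := by
      show f γ = f ((α' p : Γ))
      have : ((α' p : Γ)) = lam p := rfl
      rw [this]
      have := congrArg (fun φ => φ p) hlamf
      simp only [MonoidHom.comp_apply] at this
      rw [this, hp]
    obtain ⟨q, hq⟩ := hμs ⟨(γ, α' p), hmem⟩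
    exact ⟨q, by simp [hq]⟩
  · ext p
    have h1 : f' (μ p) = α' p := by
      have := congrArg (fun φ => φ p) hμf
      simpa using this
    have h2 : ((μ p : Γ × H).2 : Γ) = lam p := by
      have : (μ p : Γ × H).2 = α' p := h1
      rw [this]; rfl
    have h3 : f (μ p : Γ × H).1 = f ((μ p : Γ × H).2 : Γ) := (μ p).2
    have h4 : f (lam p) = α p := by
      have := congrArg (fun φ => φ p) hlamf
      simpa using this
    simp only [MonoidHom.comp_apply]
    rw [show ((MonoidHom.fst Γ H) (Δ.subtype (μ p))) = (μ p : Γ × H).1 from rfl,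
      h3, h2, h4]
end

section
/- Let Π be a profinite group such that every finite embedding problem for Π has a proper solution. Then every non-trivial finite embedding problem for Π has infinitely many proper solutions; if moreover the set of open normal subgroups of Π is countably infinite, then every non-trivial finite embedding problem for Π has exactly countably infinitely many proper solutions. -/
open Cardinal

universe u

/-- If every finite embedding problem for the profinite group `Π` has a proper solution, then
every non-trivial finite embedding problem for `Π` has infinitely many proper solutions; and if
moreover the set of open normal subgroups of `Π` is countably infinite, then every non-trivial
finite embedding problem has exactly countably infinitely many proper solutions. -/
theorem infinitely_many_solutions_of_embeddingProblems_solvable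
    (P : Type u) [Group P] [TopologicalSpace P] [IsTopologicalGroup P]
    [CompactSpace P] [T2Space P] [TotallyDisconnectedSpace P]
    (hsol : ∀ (G Γ : Type u) [Group G] [Group Γ] [Finite G] [Finite Γ]
      (α : P →* G) (f : Γ →* G), ContinuousToDiscrete α → Function.Surjective α →
      Function.Surjective f →
      ∃ l : P →* Γ, ContinuousToDiscrete l ∧ Function.Surjective l ∧ f.comp l = α) :
    ∀ (G Γ : Type u) [Group G] [Group Γ] [Finite G] [Finite Γ]
      (α : P →* G) (f : Γ →* G), ContinuousToDiscrete α → Function.Surjective α →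
      Function.Surjective f → f.ker ≠ ⊥ →
      {l : P →* Γ | ContinuousToDiscrete l ∧ Function.Surjective l ∧ f.comp l = α}.Infinite ∧
      (#{H : Subgroup P // IsOpen (H : Set P) ∧ H.Normal} = ℵ₀ →
        #{l : P →* Γ // ContinuousToDiscrete l ∧ Function.Surjective l ∧ f.comp l = α} = ℵ₀) := by
  intro G Γ _ _ _ _ α f hαc hαs hfs hker
  set S : Set (P →* Γ) :=
    {l : P →* Γ | ContinuousToDiscrete l ∧ Function.Surjective l ∧ f.comp l = α} with hS
  -- a nontrivial kernel element
  obtain ⟨⟨k, hkker⟩, hk1'⟩ := Subgroup.ne_bot_iff_exists_ne_one.mp hker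
  have hk1 : k ≠ 1 := fun h => hk1' (Subtype.ext h)
  -- For every n, there are at least n+1 distinct solutions
  have key : ∀ n : ℕ, ∃ g : Fin (n + 1) → P →* Γ, Function.Injective g ∧ ∀ i, g i ∈ S := by
    intro n
    -- fiber power
    set K : Subgroup (Fin (n + 1) → Γ) :=
      { carrier := {x | ∀ i, f (x i) = f (x 0)}
        one_mem' := by intro i; simp
        mul_mem' := by intro a b ha hb i; simp only [Pi.mul_apply, map_mul, ha i, hb i]
        inv_mem' := by intro a ha i; simp only [Pi.inv_apply, map_inv, ha i] } with hK
    have hmem : ∀ x : K, ∀ i, f (x.1 i) = f (x.1 0) := fun x => x.2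
    set fK : K →* G := f.comp ((Pi.evalMonoidHom (fun _ => Γ) 0).comp K.subtype) with hfK
    have hfKs : Function.Surjective fK := by
      intro g
      obtain ⟨γ, hγ⟩ := hfs g
      exact ⟨⟨fun _ => γ, fun i => rfl⟩, hγ⟩
    obtain ⟨l, hlc, hls, hlf⟩ := hsol G K α fK hαc hαs hfKs
    refine ⟨fun i => ((Pi.evalMonoidHom (fun _ => Γ) i).comp K.subtype).comp l, ?_, ?_⟩
    · intro i j hij
      by_contra hne
      obtain ⟨x, hx⟩ := hls ⟨fun m => if m = i then k else 1, by
        intro m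
        by_cases h : m = i <;> by_cases h0 : (0 : Fin (n+1)) = i <;>
          simp [h, h0, hkker, MonoidHom.mem_ker.mp hkker]⟩
      have h2 : (l x).1 i = (l x).1 j := DFunLike.congr_fun hij x
      rw [hx] at h2
      simp only [if_pos rfl, if_neg (Ne.symm hne)] at h2
      exact hk1 h2
    · intro i
      refine ⟨?_, ?_, ?_⟩
      · intro s
        exact hlc ((fun x : K => x.1 i) ⁻¹' s)
      · intro γ
        obtain ⟨x, hx⟩ := hls ⟨fun _ => γ, fun i => rfl⟩
        exact ⟨x, by simp [hx]⟩
      · ext x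
        have := congrArg (fun m : P →* G => m x) hlf
        exact (hmem (l x) i).trans this
  have hinf : S.Infinite := by
    by_contra hfin
    rw [Set.not_infinite] at hfin
    haveI := hfin.fintype
    obtain ⟨g, hginj, hgmem⟩ := key (Fintype.card S)
    have : Fintype.card (Fin (Fintype.card S + 1)) ≤ Fintype.card S :=
      Fintype.card_le_of_injective (fun i => (⟨g i, hgmem i⟩ : S))
        (fun a b hab => hginj (congrArg Subtype.val hab))
    simp at this
  refine ⟨hinf, ?_⟩
  intro hcount
  haveI : Countable {H : Subgroup P // IsOpen (H : Set P) ∧ H.Normal} :=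
    Cardinal.mk_le_aleph0_iff.mp hcount.le
  -- countability of S
  have hSc : S.Countable := by
    have hsub : S ⊆ ⋃ H ∈ {H : Subgroup P | IsOpen (H : Set P) ∧ H.Normal},
        {l : P →* Γ | l.ker = H ∧ ContinuousToDiscrete l} := by
      intro l hl
      refine Set.mem_biUnion ?_ ⟨rfl, hl.1⟩
      constructor
      · have : (l.ker : Set P) = l ⁻¹' {1} := rfl
        rw [this]
        exact hl.1 _
      · infer_instance
    refine Set.Countable.mono hsub ?_
    refine Set.Countable.biUnion ?_ ?_
    · exact Set.countable_coe_iff.mp ‹_›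
    · intro H hH
      haveI : Finite (P ⧸ H) := Subgroup.quotient_finite_of_isOpen H hH.1
      haveI : Finite ((P ⧸ H) → Γ) := inferInstance
      have : Finite {l : P →* Γ | l.ker = H ∧ ContinuousToDiscrete l} := by
        refine Finite.of_injective
          (fun l : {l : P →* Γ | l.ker = H ∧ ContinuousToDiscrete l} =>
            fun q : P ⧸ H => l.1 q.out) ?_
        intro l1 l2 heq
        ext x
        obtain ⟨h1, hh1⟩ := QuotientGroup.mk_out_eq_mul H x
        have e1 : l1.1 x = l1.1 ((QuotientGroup.mk x : P ⧸ H).out) := by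
          rw [hh1, map_mul]
          have : (h1 : P) ∈ l1.1.ker := by rw [l1.2.1]; exact h1.2
          rw [MonoidHom.mem_ker.mp this, mul_one]
        have e2 : l2.1 x = l2.1 ((QuotientGroup.mk x : P ⧸ H).out) := by
          rw [hh1, map_mul]
          have : (h1 : P) ∈ l2.1.ker := by rw [l2.2.1]; exact h1.2
          rw [MonoidHom.mem_ker.mp this, mul_one]
        rw [e1, e2]
        exact congrFun heq (QuotientGroup.mk x)
      exact (Set.toFinite _).countable
  haveI : Countable S := hSc.to_subtype
  haveI : Infinite S := hinf.to_subtype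
  change #↥S = ℵ₀
  exact le_antisymm Cardinal.mk_le_aleph0 (Cardinal.aleph0_le_mk _)
end
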